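/- There is an absolute constant C > 0 such that for all real M ≥ 1, all real U, T with 0 ≤ U ≤ √M and 0 ≤ T ≤ √M, all real Ξ with 0 ≤ Ξ ≤ M, all positive integers m, n, k, and either choice of sign ±, one has |∫_M^{M+Ξ} x^{1/2}·e(±(2√(m(x+T))/k + 2√(n(x+U))/k)) dx| ≤ C·k·M/(√m + √n). -/

import Mathlib

open Complex MeasureTheory

set_option maxHeartbeats 1000000

/-- `e(t) = exp(2πit)`. -/
noncomputable def e (t : ℝ) : ℂ := Complex.exp (2 * Real.pi * Complex.I * t)

lemma e_abs (t : ℝ) : ‖e t‖ = 1 := by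
  simp [e, Complex.norm_exp]

lemma main_bound (M U T Ξ : ℝ) (hM : 1 ≤ M) (hU : 0 ≤ U) (hUM : U ≤ Real.sqrt M)
    (hT : 0 ≤ T) (hTM : T ≤ Real.sqrt M) (hΞ0 : 0 ≤ Ξ) (hΞ : Ξ ≤ M)
    (m n k : ℕ) (hm : 0 < m) (hn : 0 < n) (hk : 0 < k) :
    ‖∫ x in M..(M + Ξ), ((x ^ ((1:ℝ)/2) : ℝ) : ℂ) *
        e (2 * Real.sqrt (m * (x + T)) / k + 2 * Real.sqrt (n * (x + U)) / k)‖ ≤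
      3 * k * M / (Real.sqrt m + Real.sqrt n) := by
  have hK0 : (0:ℝ) < (k:ℝ) := by exact_mod_cast hk
  set K : ℝ := (k : ℝ) with hKdef
  set sm : ℝ := Real.sqrt m with hsmdef
  set sn : ℝ := Real.sqrt n with hsndef
  have hsm : 0 < sm := Real.sqrt_pos.mpr (by exact_mod_cast hm)
  have hsn : 0 < sn := Real.sqrt_pos.mpr (by exact_mod_cast hn)
  set a : ℝ := M with hadef
  set b : ℝ := M + Ξ with hbdef
  have hab : a ≤ b := by simp [hadef, hbdef]; linarith
  have hM0 : (0:ℝ) < M := by linarith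
  have hSab : Set.uIcc a b = Set.Icc a b := Set.uIcc_of_le hab
  -- basic positivity facts on the interval
  have hxfacts : ∀ x ∈ Set.uIcc a b, 1 ≤ x ∧ x ≤ M + Ξ := by
    intro x hx
    rw [hSab] at hx
    exact ⟨le_trans hM hx.1, hx.2⟩
  set D : ℝ → ℝ := fun x => sm / Real.sqrt (x + T) + sn / Real.sqrt (x + U) with hDdef
  set D' : ℝ → ℝ := fun x =>
    sm * -(1 / (2 * Real.sqrt (x + T)) / Real.sqrt (x + T) ^ 2) +
    sn * -(1 / (2 * Real.sqrt (x + U)) / Real.sqrt (x + U) ^ 2) with hD'def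
  set h : ℝ → ℝ := fun x => K * Real.sqrt x / D x with hhdef
  set h' : ℝ → ℝ := fun x =>
    (K * (1 / (2 * Real.sqrt x)) * D x - K * Real.sqrt x * D' x) / (D x) ^ 2 with hh'def
  set Φ : ℝ → ℝ := fun x => 2 * (sm * Real.sqrt (x + T)) / K + 2 * (sn * Real.sqrt (x + U)) / K
    with hΦdef
  set v : ℝ → ℂ := fun x => e (Φ x) with hvdef
  set v' : ℝ → ℂ := fun x => 2 * Real.pi * Complex.I * ((D x / K : ℝ) : ℂ) * v x with hv'def
  set u : ℝ → ℂ := fun x => ((h x : ℝ) : ℂ) / (2 * Real.pi * Complex.I) with hudef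
  set u' : ℝ → ℂ := fun x => ((h' x : ℝ) : ℂ) / (2 * Real.pi * Complex.I) with hu'def
  -- pointwise positivity for x ≥ 1
  have hDpos : ∀ x : ℝ, 1 ≤ x → 0 < D x := by
    intro x hx
    have h1 : 0 < Real.sqrt (x + T) := Real.sqrt_pos.mpr (by linarith)
    have h2 : 0 < Real.sqrt (x + U) := Real.sqrt_pos.mpr (by linarith)
    have : 0 < sm / Real.sqrt (x + T) := div_pos hsm h1
    have : 0 < sn / Real.sqrt (x + U) := div_pos hsn h2
    simp only [hDdef]
    positivity
  -- derivative of x ↦ √(x + c)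
  have hsqrtderiv : ∀ (c x : ℝ), 0 ≤ c → 1 ≤ x →
      HasDerivAt (fun y => Real.sqrt (y + c)) (1 / (2 * Real.sqrt (x + c))) x := by
    intro c x hc hx
    have hne : x + c ≠ 0 := by positivity
    have h1 : HasDerivAt (fun y : ℝ => y + c) 1 x := (hasDerivAt_id x).add_const c
    have h2 := (Real.hasDerivAt_sqrt hne).comp x h1
    exact h1.sqrt hne
  have hDderiv : ∀ x : ℝ, 1 ≤ x → HasDerivAt D (D' x) x := by
    intro x hx
    have h1 : Real.sqrt (x + T) ≠ 0 := by
      have : 0 < Real.sqrt (x + T) := Real.sqrt_pos.mpr (by linarith)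
      positivity
    have h2 : Real.sqrt (x + U) ≠ 0 := by
      have : 0 < Real.sqrt (x + U) := Real.sqrt_pos.mpr (by linarith)
      positivity
    have hT' := ((hsqrtderiv T x hT hx).inv h1).const_mul sm
    have hU' := ((hsqrtderiv U x hU hx).inv h2).const_mul sn
    have := hT'.add hU'
    refine this.congr_deriv ?_
    simp only [hD'def]
    ring
  have hhderiv : ∀ x : ℝ, 1 ≤ x → HasDerivAt h (h' x) x := by
    intro x hx
    have hx0 : x ≠ 0 := by positivity
    have hnum : HasDerivAt (fun y => K * Real.sqrt y) (K * (1 / (2 * Real.sqrt x))) x :=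
      (Real.hasDerivAt_sqrt hx0).const_mul K
    exact hnum.div (hDderiv x hx) (ne_of_gt (hDpos x hx))
  have hΦderiv : ∀ x : ℝ, 1 ≤ x → HasDerivAt Φ (D x / K) x := by
    intro x hx
    have h1 : Real.sqrt (x + T) ≠ 0 := by
      have : 0 < Real.sqrt (x + T) := Real.sqrt_pos.mpr (by linarith)
      positivity
    have h2 : Real.sqrt (x + U) ≠ 0 := by
      have : 0 < Real.sqrt (x + U) := Real.sqrt_pos.mpr (by linarith)
      positivity
    have hT' := (((hsqrtderiv T x hT hx).const_mul sm).const_mul 2).div_const K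
    have hU' := (((hsqrtderiv U x hU hx).const_mul sn).const_mul 2).div_const K
    have := hT'.add hU'
    refine this.congr_deriv ?_
    simp only [hDdef]
    field_simp
  have hvderiv : ∀ x : ℝ, 1 ≤ x → HasDerivAt v (v' x) x := by
    intro x hx
    have h1 : HasDerivAt (fun y : ℝ => ((Φ y : ℝ) : ℂ)) ((D x / K : ℝ) : ℂ) x :=
      (hΦderiv x hx).ofReal_comp
    have h2 := (h1.const_mul (2 * (Real.pi : ℂ) * Complex.I)).cexp
    refine h2.congr_deriv ?_
    simp [hv'def, hvdef, e]
    ring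
  have huderiv : ∀ x : ℝ, 1 ≤ x → HasDerivAt u (u' x) x := by
    intro x hx
    exact ((hhderiv x hx).ofReal_comp).div_const _

  -- positivity facts needed repeatedly
  have hsT_pos : ∀ x : ℝ, 1 ≤ x → 0 < Real.sqrt (x + T) :=
    fun x hx => Real.sqrt_pos.mpr (by linarith)
  have hsU_pos : ∀ x : ℝ, 1 ≤ x → 0 < Real.sqrt (x + U) :=
    fun x hx => Real.sqrt_pos.mpr (by linarith)
  have hsx_pos : ∀ x : ℝ, 1 ≤ x → 0 < Real.sqrt x :=
    fun x hx => Real.sqrt_pos.mpr (by linarith)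
  have hpi := Real.pi_pos
  have hnorm2pi : ‖(2 * (Real.pi : ℂ) * Complex.I)‖ = 2 * Real.pi := by
    simp [abs_of_pos hpi]
  have h2piI_ne : (2 * (Real.pi : ℂ) * Complex.I) ≠ 0 := by
    simp [Real.pi_ne_zero, Complex.I_ne_zero]
  have hnormv : ∀ x : ℝ, ‖v x‖ = 1 := by
    intro x
    simp only [hvdef]
    rw [e_abs]
  -- nonnegativity of h and h'
  have hhnonneg : ∀ x : ℝ, 1 ≤ x → 0 ≤ h x := by
    intro x hx
    have := hDpos x hx
    have := hsx_pos x hx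
    simp only [hhdef]
    positivity
  have hD'nonpos : ∀ x : ℝ, 1 ≤ x → D' x ≤ 0 := by
    intro x hx
    have h1 := hsT_pos x hx
    have h2 := hsU_pos x hx
    have hA : (0:ℝ) ≤ sm * (1 / (2 * Real.sqrt (x + T)) / Real.sqrt (x + T) ^ 2) := by positivity
    have hB : (0:ℝ) ≤ sn * (1 / (2 * Real.sqrt (x + U)) / Real.sqrt (x + U) ^ 2) := by positivity
    simp only [hD'def]
    nlinarith
  have hh'nonneg : ∀ x : ℝ, 1 ≤ x → 0 ≤ h' x := by
    intro x hx
    have h1 := hDpos x hx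
    have h2 := hsx_pos x hx
    have h3 := hD'nonpos x hx
    simp only [hh'def]
    apply div_nonneg _ (by positivity)
    have hA : (0:ℝ) ≤ K * (1 / (2 * Real.sqrt x)) * D x := by positivity
    have hB : K * Real.sqrt x * D' x ≤ 0 :=
      mul_nonpos_of_nonneg_of_nonpos (by positivity) h3
    exact sub_nonneg.mpr (hB.trans hA)
  -- continuity and integrability
  have hne_T : ∀ x ∈ Set.uIcc a b, Real.sqrt (x + T) ≠ 0 :=
    fun x hx => ne_of_gt (hsT_pos x (hxfacts x hx).1)
  have hne_U : ∀ x ∈ Set.uIcc a b, Real.sqrt (x + U) ≠ 0 :=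
    fun x hx => ne_of_gt (hsU_pos x (hxfacts x hx).1)
  have hne_x : ∀ x ∈ Set.uIcc a b, Real.sqrt x ≠ 0 :=
    fun x hx => ne_of_gt (hsx_pos x (hxfacts x hx).1)
  have hne_D : ∀ x ∈ Set.uIcc a b, D x ≠ 0 :=
    fun x hx => ne_of_gt (hDpos x (hxfacts x hx).1)
  have hcsqrt : ∀ c : ℝ, Continuous (fun x : ℝ => Real.sqrt (x + c)) :=
    fun c => Real.continuous_sqrt.comp (continuous_id.add continuous_const)
  have hcD : ContinuousOn D (Set.uIcc a b) := by
    apply ContinuousOn.add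
    · exact continuousOn_const.div (hcsqrt T).continuousOn hne_T
    · exact continuousOn_const.div (hcsqrt U).continuousOn hne_U
  have hcD' : ContinuousOn D' (Set.uIcc a b) := by
    apply ContinuousOn.add
    · apply continuousOn_const.mul
      apply ContinuousOn.neg
      apply ContinuousOn.div
      · exact continuousOn_const.div (continuousOn_const.mul (hcsqrt T).continuousOn)
          (fun x hx => by
            have h0 := hsT_pos x (hxfacts x hx).1
            exact ne_of_gt (by linarith))
      · exact (hcsqrt T).continuousOn.pow 2
      · intro x hx
        have h0 := hsT_pos x (hxfacts x hx).1
        exact pow_ne_zero _ (ne_of_gt h0)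
    · apply continuousOn_const.mul
      apply ContinuousOn.neg
      apply ContinuousOn.div
      · exact continuousOn_const.div (continuousOn_const.mul (hcsqrt U).continuousOn)
          (fun x hx => by
            have h0 := hsU_pos x (hxfacts x hx).1
            exact ne_of_gt (by linarith))
      · exact (hcsqrt U).continuousOn.pow 2
      · intro x hx
        have h0 := hsU_pos x (hxfacts x hx).1
        exact pow_ne_zero _ (ne_of_gt h0)
  have hcinv : ContinuousOn (fun x : ℝ => 1 / (2 * Real.sqrt x)) (Set.uIcc a b) := by
    apply ContinuousOn.div continuousOn_const
      (continuousOn_const.mul Real.continuous_sqrt.continuousOn)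
    intro x hx
    have h0 := hsx_pos x (hxfacts x hx).1
    exact ne_of_gt (by simp only [Pi.mul_apply]; linarith)
  have hch' : ContinuousOn h' (Set.uIcc a b) := by
    apply ContinuousOn.div
    · exact ((continuousOn_const.mul hcinv).mul hcD).sub
        ((continuousOn_const.mul Real.continuous_sqrt.continuousOn).mul hcD')
    · exact hcD.pow 2
    · intro x hx
      have h0 := hDpos x (hxfacts x hx).1
      exact pow_ne_zero _ (ne_of_gt h0)
  have hcv : Continuous v := by
    apply Complex.continuous_exp.comp
    apply Continuous.mul continuous_const
    exact Complex.continuous_ofReal.comp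
      (((continuous_const.mul (continuous_const.mul (hcsqrt T))).div_const K).add
        ((continuous_const.mul (continuous_const.mul (hcsqrt U))).div_const K))
  have hu'int : IntervalIntegrable u' volume a b :=
    ((Complex.continuous_ofReal.comp_continuousOn hch').div_const _).intervalIntegrable
  have hv'int : IntervalIntegrable v' volume a b := by
    apply ContinuousOn.intervalIntegrable
    exact (continuousOn_const.mul
      (Complex.continuous_ofReal.comp_continuousOn (hcD.div_const K))).mul hcv.continuousOn
  have hh'int : IntervalIntegrable h' volume a b := hch'.intervalIntegrable
  -- rewrite the integrand
  have hint_eq : (∫ x in a..b, ((x ^ ((1:ℝ)/2) : ℝ) : ℂ) *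
        e (2 * Real.sqrt (m * (x + T)) / k + 2 * Real.sqrt (n * (x + U)) / k))
      = ∫ x in a..b, u x * v' x := by
    apply intervalIntegral.integral_congr
    intro x hx
    obtain ⟨hx1, hx2⟩ := hxfacts x hx
    beta_reduce
    have hD0 : (D x) ≠ 0 := ne_of_gt (hDpos x hx1)
    have harg : 2 * Real.sqrt ((m:ℝ) * (x + T)) / (k:ℝ) + 2 * Real.sqrt ((n:ℝ) * (x + U)) / (k:ℝ)
        = Φ x := by
      rw [Real.sqrt_mul (by positivity : (0:ℝ) ≤ (m:ℝ)),
        Real.sqrt_mul (by positivity : (0:ℝ) ≤ (n:ℝ))]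
    have hrpow : x ^ ((1:ℝ)/2) = Real.sqrt x := (Real.sqrt_eq_rpow x).symm
    rw [hrpow, harg]
    have hre : h x * (D x / K) = Real.sqrt x := by
      simp only [hhdef]
      field_simp
    have hre' : ((h x : ℝ) : ℂ) * ((D x / K : ℝ) : ℂ) = ((Real.sqrt x : ℝ) : ℂ) := by
      rw [← Complex.ofReal_mul, hre]
    calc ((Real.sqrt x : ℝ) : ℂ) * e (Φ x)
        = (((h x : ℝ) : ℂ) * ((D x / K : ℝ) : ℂ)) * v x := by rw [hre']
      _ = u x * v' x := by
          have key : ∀ (A B V c : ℂ), c ≠ 0 → A / c * (c * B * V) = A * B * V := by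
            intro A B V c hc
            field_simp
          simp only [hudef, hv'def]
          exact (key _ _ _ _ h2piI_ne).symm
  -- integration by parts
  have hibp := intervalIntegral.integral_mul_deriv_eq_deriv_mul
    (fun x hx => huderiv x (hxfacts x hx).1) (fun x hx => hvderiv x (hxfacts x hx).1)
    hu'int hv'int
  -- FTC for h'
  have hftc : (∫ x in a..b, h' x) = h b - h a :=
    intervalIntegral.integral_eq_sub_of_hasDerivAt
      (fun x hx => hhderiv x (hxfacts x hx).1) hh'int
  have ha1 : (1:ℝ) ≤ a := hM
  have hb1 : (1:ℝ) ≤ b := by simp only [hbdef]; linarith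
  -- norm of u·v at a point
  have hnormuv : ∀ x : ℝ, 1 ≤ x → ‖u x * v x‖ = h x / (2 * Real.pi) := by
    intro x hx
    rw [norm_mul, hnormv, mul_one]
    simp only [hudef]
    rw [norm_div, hnorm2pi, Complex.norm_real, Real.norm_eq_abs,
      _root_.abs_of_nonneg (hhnonneg x hx)]
  -- bound the remaining integral
  have hJ : ‖∫ x in a..b, u' x * v x‖ ≤ (h b - h a) / (2 * Real.pi) := by
    have h1 : ‖∫ x in a..b, u' x * v x‖ ≤ ∫ x in a..b, ‖u' x * v x‖ :=
      intervalIntegral.norm_integral_le_integral_norm hab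
    have h2 : (∫ x in a..b, ‖u' x * v x‖) = ∫ x in a..b, h' x / (2 * Real.pi) := by
      apply intervalIntegral.integral_congr
      intro x hx
      obtain ⟨hx1, _⟩ := hxfacts x hx
      beta_reduce
      rw [norm_mul, hnormv, mul_one]
      simp only [hu'def]
      rw [norm_div, hnorm2pi, Complex.norm_real, Real.norm_eq_abs,
        _root_.abs_of_nonneg (hh'nonneg x hx1)]
    have h3 : (∫ x in a..b, h' x / (2 * Real.pi)) = (h b - h a) / (2 * Real.pi) := by
      rw [intervalIntegral.integral_div, hftc]
    rw [h2, h3] at h1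
    exact h1
  -- final bound on h b
  have hsM_le : Real.sqrt M ≤ M := by
    have h1 : Real.sqrt M ≤ Real.sqrt (M ^ 2) := Real.sqrt_le_sqrt (by nlinarith)
    rwa [Real.sqrt_sq hM0.le] at h1
  have hQpos : 0 < Real.sqrt (b + Real.sqrt M) := Real.sqrt_pos.mpr (by
    have := Real.sqrt_nonneg M
    simp only [hbdef]
    linarith)
  have hDb_lb : (sm + sn) / Real.sqrt (b + Real.sqrt M) ≤ D b := by
    have h1 : Real.sqrt (b + T) ≤ Real.sqrt (b + Real.sqrt M) :=
      Real.sqrt_le_sqrt (by linarith)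
    have h2 : Real.sqrt (b + U) ≤ Real.sqrt (b + Real.sqrt M) :=
      Real.sqrt_le_sqrt (by linarith)
    have hbT := hsT_pos b hb1
    have hbU := hsU_pos b hb1
    have e1 : sm / Real.sqrt (b + Real.sqrt M) ≤ sm / Real.sqrt (b + T) := by gcongr
    have e2 : sn / Real.sqrt (b + Real.sqrt M) ≤ sn / Real.sqrt (b + U) := by gcongr
    have : (sm + sn) / Real.sqrt (b + Real.sqrt M)
        = sm / Real.sqrt (b + Real.sqrt M) + sn / Real.sqrt (b + Real.sqrt M) := add_div _ _ _
    rw [this]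
    simp only [hDdef]
    linarith
  have hkey : Real.sqrt b * Real.sqrt (b + Real.sqrt M) ≤ 3 * M := by
    rw [← Real.sqrt_mul (by positivity : (0:ℝ) ≤ b)]
    have hb2 : b ≤ 2 * M := by simp only [hbdef]; linarith
    have h1 : b * (b + Real.sqrt M) ≤ (3 * M) ^ 2 := by nlinarith [Real.sqrt_nonneg M]
    calc Real.sqrt (b * (b + Real.sqrt M)) ≤ Real.sqrt ((3 * M) ^ 2) := Real.sqrt_le_sqrt h1
      _ = 3 * M := Real.sqrt_sq (by positivity)
  have hhb_le : h b ≤ 3 * K * M / (sm + sn) := by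
    have hDb : 0 < D b := hDpos b hb1
    have hlb : 0 < (sm + sn) / Real.sqrt (b + Real.sqrt M) := by positivity
    have step1 : h b ≤ K * Real.sqrt b / ((sm + sn) / Real.sqrt (b + Real.sqrt M)) := by
      simp only [hhdef]
      gcongr
    have step2 : K * Real.sqrt b / ((sm + sn) / Real.sqrt (b + Real.sqrt M))
        = K * (Real.sqrt b * Real.sqrt (b + Real.sqrt M)) / (sm + sn) := by
      field_simp
    have step3 : K * (Real.sqrt b * Real.sqrt (b + Real.sqrt M)) / (sm + sn)
        ≤ K * (3 * M) / (sm + sn) := by gcongr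
    calc h b ≤ K * (Real.sqrt b * Real.sqrt (b + Real.sqrt M)) / (sm + sn) := by
          rw [← step2]; exact step1
      _ ≤ K * (3 * M) / (sm + sn) := step3
      _ = 3 * K * M / (sm + sn) := by ring
  -- put everything together
  rw [hint_eq, hibp]
  have hb0 : 0 ≤ h b := hhnonneg b hb1
  have ha0 : 0 ≤ h a := hhnonneg a ha1
  calc ‖u b * v b - u a * v a - ∫ x in a..b, u' x * v x‖
      ≤ ‖u b * v b - u a * v a‖ + ‖∫ x in a..b, u' x * v x‖ := norm_sub_le _ _
    _ ≤ (‖u b * v b‖ + ‖u a * v a‖) + (h b - h a) / (2 * Real.pi) := by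
        have := norm_sub_le (u b * v b) (u a * v a)
        linarith [hJ]
    _ = (h b / (2 * Real.pi) + h a / (2 * Real.pi)) + (h b - h a) / (2 * Real.pi) := by
        rw [hnormuv b hb1, hnormuv a ha1]
    _ = h b / Real.pi := by field_simp; ring
    _ ≤ h b := by
        apply div_le_self hb0
        linarith [Real.pi_gt_three]
    _ ≤ 3 * K * M / (sm + sn) := hhb_le

lemma e_neg (t : ℝ) : e (-t) = starRingEnd ℂ (e t) := by
  simp only [e, ← Complex.exp_conj, map_mul, Complex.conj_I, Complex.conj_ofReal,
    map_ofNat, Complex.ofReal_neg]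
  ring_nf

lemma interval_integral_conj (f : ℝ → ℂ) (a b : ℝ) :
    ∫ x in a..b, starRingEnd ℂ (f x) = starRingEnd ℂ (∫ x in a..b, f x) := by
  simp [intervalIntegral, integral_conj]

theorem mean_square_lemma_one :
    ∃ C : ℝ, 0 < C ∧ ∀ M U T Ξ : ℝ, 1 ≤ M → 0 ≤ U → U ≤ Real.sqrt M → 0 ≤ T →
      T ≤ Real.sqrt M → 0 ≤ Ξ → Ξ ≤ M → ∀ m n k : ℕ, 0 < m → 0 < n → 0 < k →
      ∀ s : ℝ, s = 1 ∨ s = -1 →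
        ‖∫ x in M..(M + Ξ), ((x ^ ((1:ℝ)/2) : ℝ) : ℂ) *
            e (s * (2 * Real.sqrt (m * (x + T)) / k + 2 * Real.sqrt (n * (x + U)) / k))‖ ≤
          C * k * M / (Real.sqrt m + Real.sqrt n) := by
  refine ⟨3, by norm_num, ?_⟩
  intro M U T Ξ hM hU hUM hT hTM hΞ0 hΞ m n k hm hn hk s hs
  rcases hs with rfl | rfl
  · simpa only [one_mul] using main_bound M U T Ξ hM hU hUM hT hTM hΞ0 hΞ m n k hm hn hk
  · have heq : (∫ x in M..(M + Ξ), ((x ^ ((1:ℝ)/2) : ℝ) : ℂ) *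
          e ((-1 : ℝ) * (2 * Real.sqrt (m * (x + T)) / k + 2 * Real.sqrt (n * (x + U)) / k)))
        = starRingEnd ℂ (∫ x in M..(M + Ξ), ((x ^ ((1:ℝ)/2) : ℝ) : ℂ) *
          e (2 * Real.sqrt (m * (x + T)) / k + 2 * Real.sqrt (n * (x + U)) / k)) := by
      rw [← interval_integral_conj]
      apply intervalIntegral.integral_congr
      intro x hx
      beta_reduce
      rw [neg_one_mul, e_neg, map_mul, Complex.conj_ofReal]
    rw [heq, Complex.norm_conj]
    exact main_bound M U T Ξ hM hU hUM hT hTM hΞ0 hΞ m n k hm hn hk
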